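/- There is a bijection between the set of signed skew derangements on [n] whose representation π = π_1 ⋯ π_n satisfies π_n ≠ 0 (last entry is not unbarred zero) and the set of derangements of type B on [n]; hence the number of such signed skew derangements equals D_n^B. -/

import Mathlib

set_option maxHeartbeats 1000000

/-- Recursively reconstruct the sign function ε from the boolean data b. -/
def epsAux (n : ℕ) (b : ℕ → Bool) : ℕ → Bool
  | 0 => b (n - 1)
  | j + 1 => (b j == epsAux n b j)

section Aux

variable {n : ℕ}

/-- The boolean data associated to a sign function ε. -/
def bmap (ε : Fin n → Bool) (i : Fin n) : Bool :=
  if h : i.val + 1 < n then (ε ⟨i.val + 1, h⟩ == ε i)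
  else ε ⟨0, Nat.lt_of_le_of_lt (Nat.zero_le _) i.isLt⟩

/-- Reconstruct ε from b. -/
def epsF (b : Fin n → Bool) (i : Fin n) : Bool :=
  epsAux n (fun j => if h : j < n then b ⟨j, h⟩ else false) i.val

lemma beq_beq_right (x y : Bool) : ((x == y) == y) = x := by
  cases x <;> cases y <;> rfl

lemma beq_eq_right_iff (x y : Bool) : (x == y) = y ↔ x = true := by
  cases x <;> cases y <;> simp

lemma epsF_zero (b : Fin n → Bool) (h : 0 < n) :
    epsF b ⟨0, h⟩ = b ⟨n - 1, by omega⟩ := by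
  simp only [epsF, epsAux]
  rw [dif_pos (by omega : n - 1 < n)]

lemma epsF_succ (b : Fin n → Bool) (j : ℕ) (h : j + 1 < n) :
    epsF b ⟨j + 1, h⟩ = (b ⟨j, by omega⟩ == epsF b ⟨j, by omega⟩) := by
  simp only [epsF, epsAux]
  rw [dif_pos (by omega : j < n)]

lemma epsF_bmap (ε : Fin n → Bool) : epsF (bmap ε) = ε := by
  funext i
  obtain ⟨i, hi⟩ := i
  induction i with
  | zero =>
      rw [epsF_zero _ hi]
      simp only [bmap]
      rw [dif_neg (by omega : ¬ (n - 1) + 1 < n)]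
  | succ j ih =>
      rw [epsF_succ _ _ hi, ih (by omega)]
      simp only [bmap]
      rw [dif_pos (by omega : j + 1 < n)]
      exact beq_beq_right _ _
  -- done

lemma bmap_epsF (b : Fin n → Bool) : bmap (epsF b) = b := by
  funext i
  simp only [bmap]
  split
  · next h =>
      rw [epsF_succ b i.val h]
      have : (⟨i.val, by omega⟩ : Fin n) = i := rfl
      rw [this]
      exact beq_beq_right _ _
  · next h =>
      have hi : i.val = n - 1 := by have := i.isLt; omega
      rw [epsF_zero b]
      congr 1
      exact Fin.ext hi.symm

lemma val_add_one' [NeZero n] (a : Fin n) :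
    ((a + 1 : Fin n)).val = if a.val = n - 1 then 0 else a.val + 1 := by
  have hn : 0 < n := Nat.pos_of_ne_zero (NeZero.ne n)
  have h1 : (1 : Fin n).val = 1 % n := Fin.val_one' n
  rw [Fin.val_add, h1]
  have ha := a.isLt
  rcases Nat.lt_or_ge 1 n with h2 | h2
  · rw [Nat.mod_eq_of_lt h2]
    split
    · next h => rw [show a.val + 1 = n by omega, Nat.mod_self]
    · next h => exact Nat.mod_eq_of_lt (by omega)
  · have hn1 : n = 1 := by omega
    subst hn1
    simp

/-- The bijection. -/
def theEquiv (n : ℕ) (hn : 0 < n) :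
    {p : (Fin n → Bool) × (Fin n → Fin n × Bool) //
        Function.Injective (fun i => (p.2 i).1) ∧
        (∀ i, (p.2 i).2 = p.1 ((p.2 i).1)) ∧
        (∀ i : Fin n, ¬((p.2 i).1.val = i.val + 1 ∧ (p.2 i).2 = p.1 i)) ∧
        p.2 ⟨n - 1, by omega⟩ ≠ (⟨0, by omega⟩, true)} ≃
      {f : Fin n → Fin n × Bool //
        Function.Injective (fun i => (f i).1) ∧ ∀ i, f i ≠ (i, true)} :=
  haveI : NeZero n := ⟨by omega⟩
  { toFun := fun p => ⟨fun i => ((p.1.2 i).1 - 1, bmap p.1.1 i), by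
      obtain ⟨⟨ε, g⟩, hinj, h2, h3, h4⟩ := p
      dsimp only at *
      constructor
      · intro a b hab
        exact hinj (sub_left_injective hab)
      · intro i heq
        rw [Prod.mk.injEq] at heq
        obtain ⟨hv, hs⟩ := heq
        rw [sub_eq_iff_eq_add] at hv
        by_cases hc : i.val + 1 < n
        · have hval : (g i).1.val = i.val + 1 := by
            rw [hv, val_add_one', if_neg (by omega)]
          have hsign : (g i).2 = ε i := by
            rw [h2 i]
            have : (g i).1 = ⟨i.val + 1, hc⟩ := Fin.ext hval
            rw [this]
            have hb : bmap ε i = (ε ⟨i.val + 1, hc⟩ == ε i) := by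
              simp only [bmap]; rw [dif_pos hc]
            rw [hs] at hb
            exact (beq_iff_eq.mp hb.symm)
          exact h3 i ⟨hval, hsign⟩
        · have hi : i.val = n - 1 := by have := i.isLt; omega
          have hval : (g i).1 = ⟨0, by omega⟩ := by
            apply Fin.ext
            show _ = (0 : ℕ)
            rw [hv, val_add_one', if_pos hi]
          have hb : bmap ε i = ε ⟨0, by omega⟩ := by
            simp only [bmap]; rw [dif_neg (by omega)]
          have hieq : i = ⟨n - 1, by omega⟩ := Fin.ext hi
          have hsnd : (g i).2 = true := by
            rw [h2 i, hval]
            show ε ⟨0, by omega⟩ = true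
            rw [← hb, hs]
          apply h4
          rw [← hieq]
          exact Prod.ext hval hsnd⟩,
    invFun := fun f => ⟨(epsF (fun i => (f.1 i).2),
        fun i => ((f.1 i).1 + 1, epsF (fun j => (f.1 j).2) ((f.1 i).1 + 1))), by
      obtain ⟨f, hinj, hder⟩ := f
      dsimp only at *
      refine ⟨?_, fun i => rfl, ?_, ?_⟩
      · intro a b hab
        exact hinj (add_left_injective 1 hab)
      · rintro i ⟨hv, hs⟩
        rw [val_add_one'] at hv
        have hvv : (f i).1.val = i.val := by
          split at hv
          · omega
          · omega
        have hlt : i.val + 1 < n := by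
          split at hv
          · omega
          · have := ((f i).1 + 1).isLt; omega
        have hfi : (f i).1 = i := Fin.ext hvv
        have h1 : ((f i).1 + 1 : Fin n) = ⟨i.val + 1, hlt⟩ := by
          apply Fin.ext
          rw [val_add_one', if_neg (by omega), hvv]
        rw [h1, epsF_succ _ _ hlt] at hs
        have hieq : (⟨i.val, by omega⟩ : Fin n) = i := rfl
        rw [hieq] at hs
        have hb : (f i).2 = true := (beq_eq_right_iff _ _).mp hs
        exact hder i (Prod.ext hfi hb)
      · intro heq
        rw [Prod.mk.injEq] at heq
        obtain ⟨hv, hs⟩ := heq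
        have hval : ((f ⟨n - 1, by omega⟩).1 + 1 : Fin n).val = 0 := by
          rw [hv]
        rw [val_add_one'] at hval
        have hvv : (f ⟨n - 1, by omega⟩).1.val = n - 1 := by
          split at hval
          · assumption
          · omega
        have h0 : ((f ⟨n - 1, by omega⟩).1 + 1 : Fin n) = ⟨0, by omega⟩ := by
          apply Fin.ext
          show _ = (0 : ℕ)
          rw [val_add_one', if_pos hvv]
        rw [h0, epsF_zero _ (by omega)] at hs
        exact hder ⟨n - 1, by omega⟩ (Prod.ext (Fin.ext hvv) hs)⟩,
    left_inv := by
      rintro ⟨⟨ε, g⟩, hinj, h2, h3, h4⟩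
      apply Subtype.ext
      dsimp only
      have hε : epsF (fun i => (((g i).1 - 1, bmap ε i) : Fin n × Bool).2) = ε :=
        epsF_bmap ε
      apply Prod.ext
      · exact hε
      · funext i
        dsimp only
        rw [hε]
        apply Prod.ext
        · exact sub_add_cancel _ _
        · dsimp only
          rw [sub_add_cancel]
          exact (h2 i).symm,
    right_inv := by
      rintro ⟨f, hinj, hder⟩
      apply Subtype.ext
      funext i
      dsimp only
      apply Prod.ext
      · exact add_sub_cancel_right _ _
      · dsimp only
        have : bmap (epsF fun j => (f j).2) i = (f i).2 := by
          rw [bmap_epsF]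
        exact this }

end Aux

/-- Signed skew derangements on [n] whose representation does NOT end with
    unbarred 0 are in bijection with derangements of type B on [n]; in
    particular they number D_n^B. Encoding as in the companion statements:
    a signed skew derangement is a pair (ε, g) with ε : Fin n → Bool the
    signs of X and `g i = (v, b)` the image of the element ±(i+1) of X. -/
theorem skew_derangement_last_nonzero (n : ℕ) (hn : 1 ≤ n) :
    Nonempty
      ({p : (Fin n → Bool) × (Fin n → Fin n × Bool) //
          Function.Injective (fun i => (p.2 i).1) ∧
          (∀ i, (p.2 i).2 = p.1 ((p.2 i).1)) ∧
          (∀ i : Fin n, ¬((p.2 i).1.val = i.val + 1 ∧ (p.2 i).2 = p.1 i)) ∧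
          p.2 ⟨n - 1, by omega⟩ ≠ (⟨0, by omega⟩, true)} ≃
        {f : Fin n → Fin n × Bool //
          Function.Injective (fun i => (f i).1) ∧ ∀ i, f i ≠ (i, true)}) ∧
    Fintype.card {p : (Fin n → Bool) × (Fin n → Fin n × Bool) //
        Function.Injective (fun i => (p.2 i).1) ∧
        (∀ i, (p.2 i).2 = p.1 ((p.2 i).1)) ∧
        (∀ i : Fin n, ¬((p.2 i).1.val = i.val + 1 ∧ (p.2 i).2 = p.1 i)) ∧
        p.2 ⟨n - 1, by omega⟩ ≠ (⟨0, by omega⟩, true)} =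
      Fintype.card {f : Fin n → Fin n × Bool //
        Function.Injective (fun i => (f i).1) ∧ ∀ i, f i ≠ (i, true)} := by
  exact ⟨⟨theEquiv n hn⟩, Fintype.card_congr (theEquiv n hn)⟩
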